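/- Let q, r ∈ F₂[x] be squarefree, let b ∈ F₂[x] be coprime to r, and let s ∈ F₂[x]. Then the number of a ∈ (F₂[x]/(q))^× such that the denominator (in lowest terms) of a/q + b/r equals s is at most 2^{deg s + deg(gcd(q,r)) − deg r}. -/

import Mathlib

open Polynomial
open scoped Classical

noncomputable section

abbrev F2 := ZMod 2
abbrev Kinf := LaurentSeries F2
def polyToK (f : F2[X]) : Kinf :=
  ∑ i ∈ f.support, HahnSeries.single (-(i : ℤ)) (f.coeff i)
def ordK (a : Kinf) : WithBot ℤ := if a = 0 then ⊥ else (↑(-a.order) : WithBot ℤ)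
def eKr (a : Kinf) : ℝ := (-1 : ℝ) ^ ((a.coeff 1).val)
def eK (a : Kinf) : ℂ := ((eKr a : ℝ) : ℂ)
def InT (θ : Kinf) : Prop := ordK θ ≤ ((-1 : ℤ) : WithBot ℤ)
def GN (N : ℕ) : Finset F2[X] :=
  Set.Finite.toFinset (s := {f : F2[X] | f.degree < (N : ℕ)}) (by
    have h : {f : F2[X] | f.degree < (N : ℕ)} = ↑(Polynomial.degreeLT F2 N) := by
      ext f
      simp [Polynomial.mem_degreeLT]
    rw [h]
    have : Finite (Polynomial.degreeLT F2 N) :=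
      Finite.of_equiv _ (Polynomial.degreeLTEquiv F2 N).symm.toEquiv
    exact (Polynomial.degreeLT F2 N : Set F2[X]).toFinite)
def ratK (u s : F2[X]) : Kinf := polyToK u * (polyToK s)⁻¹

/-- τ(f): the number of divisors of `f`. -/
def tau (f : F2[X]) : ℕ := ((GN (f.natDegree + 1)).filter (fun g => g ∣ f)).card

/-- φ(f): the number of invertible residues modulo `f`. -/
def phi (f : F2[X]) : ℕ := ((GN f.natDegree).filter (fun g => IsCoprime g f)).card

/-- ω(f): the number of (irreducible nonconstant, i.e. prime) divisors of `f`. -/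
def omegaP (f : F2[X]) : ℕ :=
  ((GN (f.natDegree + 1)).filter (fun r => Irreducible r ∧ r ∣ f)).card

/-- The Möbius function on `F₂[x]`. -/
def mu (f : F2[X]) : ℤ := if Squarefree f then (-1) ^ (omegaP f) else 0

/-- The set of invertible residues modulo `s` (canonical representatives of
`(F₂[x]/(s))^×`, i.e. polynomials of degree `< deg s` coprime to `s`). -/
def residues (s : F2[X]) : Finset F2[X] := (GN s.natDegree).filter (fun t => IsCoprime t s)

/-- `α(s) = μ(s)/φ(s)`. -/
def alphaA (s : F2[X]) : ℝ := (mu s : ℝ) / (phi s : ℝ)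

/-- `α'(s) = ∏_{r | s prime} 3/(2^{deg r}+3)` for `s` squarefree, `0` otherwise. -/
def alphaB (s : F2[X]) : ℝ :=
  if Squarefree s then
    ∏ r ∈ (GN (s.natDegree + 1)).filter (fun r => Irreducible r ∧ r ∣ s),
      (3 : ℝ) / ((2 : ℝ) ^ r.natDegree + 3)
  else 0

/-- `Λ_M(f) = Σ_{s ∈ G_M} α(s) Σ_{t ∈ (F₂[x]/(s))^×} e(f t s⁻¹)`. -/
def LambdaM (M : ℕ) (f : F2[X]) : ℝ :=
  ∑ s ∈ GN M, alphaA s * ∑ t ∈ residues s, eKr (polyToK f * ratK t s)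

/-- `H_M(f) = Σ_{s ∈ G_M} α'(s) Σ_{t ∈ (F₂[x]/(s))^×} e(f t s⁻¹)`. -/
def HM (M : ℕ) (f : F2[X]) : ℝ :=
  ∑ s ∈ GN M, alphaB s * ∑ t ∈ residues s, eKr (polyToK f * ratK t s)

/-- `Λ'(f) = deg f` if `f` is prime, `0` otherwise. -/
def LambdaP (f : F2[X]) : ℝ := if Irreducible f then (f.natDegree : ℝ) else 0

/-- `Ψ(f) = Λ'(f+1) H_Q(f) 1_{f ∈ G_N}`. -/
def Psi (N Q : ℕ) (f : F2[X]) : ℝ :=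
  LambdaP (f + 1) * HM Q f * (if f ∈ GN N then 1 else 0)

/-- `Ψ'(f) = Λ_R(f+1) H_Q(f) 1_{f ∈ G_N}`. -/
def Psi' (N R Q : ℕ) (f : F2[X]) : ℝ :=
  LambdaM R (f + 1) * HM Q f * (if f ∈ GN N then 1 else 0)

/-- `Λ_r(f)` for a single prime `r`. -/
def Lambda_r (r f : F2[X]) : ℝ :=
  if r ∣ f then 0 else (2 : ℝ) ^ r.natDegree / ((2 : ℝ) ^ r.natDegree - 1)

/-- `τ²_r(f)` for a single prime `r`. -/
def tauSq_r (r f : F2[X]) : ℝ :=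
  if r ∣ f then 4 * (2 : ℝ) ^ r.natDegree / ((2 : ℝ) ^ r.natDegree + 3)
  else (2 : ℝ) ^ r.natDegree / ((2 : ℝ) ^ r.natDegree + 3)

/-- `˜Λ_M(f) = ∏_{r ∈ G_M prime} Λ_r(f)`. -/
def LambdaTilde (M : ℕ) (f : F2[X]) : ℝ :=
  ∏ r ∈ (GN M).filter (fun r => Irreducible r), Lambda_r r f

/-- `˜H_M(f) = ∏_{r ∈ G_M prime} τ²_r(f)`. -/
def HTilde (M : ℕ) (f : F2[X]) : ℝ :=
  ∏ r ∈ (GN M).filter (fun r => Irreducible r), tauSq_r r f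

/-- The element of `K∞` determined by a rational function (with `x ↦ t⁻¹`). -/
def ratToK (l : RatFunc F2) : Kinf := polyToK l.num * (polyToK l.denom)⁻¹

/-- `c : F₂(x)/F₂[x] → ℝ` (encoded on the canonical representatives
`λ = num/denom` in lowest terms with `deg num < deg denom`) is the system of Fourier
coefficients of `F : F₂[x] → ℝ`, i.e. `F(f) = Σ_λ c(λ) e(λ f)`. -/
def IsFourierCoeffs (F : F2[X] → ℝ) (c : RatFunc F2 → ℝ) : Prop :=
  (Function.support c).Finite ∧
  (∀ l : RatFunc F2, c l ≠ 0 → (l.num).degree < (l.denom).degree) ∧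
  ∀ f : F2[X], F f = ∑ᶠ l : RatFunc F2, c l * eKr (ratToK l * polyToK f)

/-- The canonical representative (mod `F₂[x]`) of a rational function. -/
def fracRat (l : RatFunc F2) : RatFunc F2 :=
  l - algebraMap F2[X] (RatFunc F2) (l.num / l.denom)

/-- `c(n, η)` from the statement of the exponential sum estimate for `Λ'`. -/
def cFun (n : ℕ) (η : Kinf) : ℝ :=
  if ordK η < ((-(n : ℤ) - 1 : ℤ) : WithBot ℤ) then 1
  else if ordK η = ((-(n : ℤ) - 1 : ℤ) : WithBot ℤ) then -1
  else 0

/-- The class `C_B(X)` (with explicit implied constant `Cst`): functions whose Fourier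
coefficients are supported on `λ` with squarefree denominator of degree `≤ X` and satisfy
`|c(λ)| ≤ Cst · τ(denom λ)^B / 2^{deg (denom λ)}`. -/
def InClassC (B X : ℕ) (Cst : ℝ) (F : F2[X] → ℝ) : Prop :=
  ∃ c : RatFunc F2 → ℝ, IsFourierCoeffs F c ∧
    (∀ l : RatFunc F2, c l ≠ 0 → Squarefree l.denom ∧ (l.denom).natDegree ≤ X) ∧
    (∀ l : RatFunc F2, |c l| ≤ Cst * (tau l.denom : ℝ) ^ B / 2 ^ (l.denom).natDegree)

/-- The fractional part `‖θ‖` of `θ ∈ K∞`: keep exactly the coefficients of `x^{-n}`, `n ≥ 1`. -/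
def fracK (θ : Kinf) : Kinf :=
  ⟨fun n => if 1 ≤ n then θ.coeff n else 0, by
    apply θ.isPWO_support'.mono
    intro n hn
    simp only [Function.mem_support, ne_eq] at hn ⊢
    intro h
    apply hn
    split_ifs
    · exact h
    · rfl⟩

lemma mem_GN_iff {N : ℕ} {f : F2[X]} : f ∈ GN N ↔ f.degree < (N : ℕ) := by
  simp [GN]

lemma GN_card (N : ℕ) : (GN N).card = 2 ^ N := by
  classical
  have h : {f : F2[X] | f.degree < (N : ℕ)} = ↑(Polynomial.degreeLT F2 N) := by
    ext f
    simp [Polynomial.mem_degreeLT]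
  have e : ((GN N : Finset F2[X]) : Set F2[X]) = ↑(Polynomial.degreeLT F2 N) := by
    rw [GN, Set.Finite.coe_toFinset, h]
  rw [← Nat.card_eq_finsetCard]
  have h2 : Nat.card { x // x ∈ GN N } = Nat.card (Fin N → F2) :=
    Nat.card_congr ((Equiv.setCongr e).trans (Polynomial.degreeLTEquiv F2 N).toEquiv)
  rw [h2]
  simp [Nat.card_eq_fintype_card]

/-- Let `q, r` be squarefree, `b` coprime to `r`, and `s` any polynomial. The number of
`a ∈ (F₂[x]/(q))^×` with `denom(a/q + b/r) = s` (denominator in lowest terms) is at most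
`2^{deg s + deg gcd(q,r) − deg r}`. -/
theorem statement_6 (q r b s : F2[X]) (hq : Squarefree q) (hr : Squarefree r)
    (hb : IsCoprime b r) :
    (((residues q).filter (fun a =>
        RatFunc.denom (algebraMap F2[X] (RatFunc F2) a / algebraMap F2[X] (RatFunc F2) q +
          algebraMap F2[X] (RatFunc F2) b / algebraMap F2[X] (RatFunc F2) r) = s)).card : ℝ)
      ≤ (2 : ℝ) ^ ((s.natDegree : ℤ) + ((EuclideanDomain.gcd q r).natDegree : ℤ)
          - (r.natDegree : ℤ)) := by
  classical
  set A := algebraMap F2[X] (RatFunc F2) with hA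
  set T := (residues q).filter (fun a =>
      RatFunc.denom (A a / A q + A b / A r) = s) with hT
  have hq0 : q ≠ 0 := hq.ne_zero
  have hr0 : r ≠ 0 := hr.ne_zero
  have hAq : A q ≠ 0 := RatFunc.algebraMap_ne_zero hq0
  have hAr : A r ≠ 0 := RatFunc.algebraMap_ne_zero hr0
  set g := EuclideanDomain.gcd q r with hgdef
  rcases Finset.eq_empty_or_nonempty T with hTe | ⟨a₀, ha₀⟩
  · rw [hTe]
    simp only [Finset.card_empty, Nat.cast_zero]
    positivity
  have hgq : g ∣ q := EuclideanDomain.gcd_dvd_left q r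
  have hgr : g ∣ r := EuclideanDomain.gcd_dvd_right q r
  have hg0 : g ≠ 0 := by
    intro h
    exact hq0 (EuclideanDomain.gcd_eq_zero_iff.mp h).1
  set r' := r / g with hr'def
  have hrr' : g * r' = r := EuclideanDomain.mul_div_cancel' hg0 hgr
  have hr'0 : r' ≠ 0 := by
    intro h
    rw [h, mul_zero] at hrr'
    exact hr0 hrr'.symm
  have hr'r : r' ∣ r := ⟨g, by rw [← hrr']; ring⟩
  -- q and r' are coprime
  have hqr' : IsCoprime q r' := by
    rw [← EuclideanDomain.gcd_isUnit_iff]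
    set d := EuclideanDomain.gcd q r' with hd
    have hdq : d ∣ q := EuclideanDomain.gcd_dvd_left q r'
    have hdr' : d ∣ r' := EuclideanDomain.gcd_dvd_right q r'
    have hdg : d ∣ g := EuclideanDomain.dvd_gcd hdq (hdr'.trans hr'r)
    exact hr d (by rw [← hrr']; exact mul_dvd_mul hdg hdr')
  -- data from a₀
  rw [hT, Finset.mem_filter] at ha₀
  obtain ⟨ha₀res, ha₀den⟩ := ha₀
  set x₀ := A a₀ / A q + A b / A r with hx₀def
  set n := a₀ * r + q * b with hn
  have hx₀ : x₀ = A n / A (q * r) := by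
    rw [hx₀def, div_add_div _ _ hAq hAr, hn]
    simp only [← map_mul, ← map_add]
  have hs0 : s ≠ 0 := ha₀den ▸ x₀.denom_ne_zero
  have hkey : x₀.num * (q * r) = n * s := by
    have := (RatFunc.num_mul_eq_mul_denom_iff
      (show q * r ≠ 0 from mul_ne_zero hq0 hr0)).mpr hx₀
    rwa [ha₀den] at this
  have hqr_dvd : q * r ∣ n * s := ⟨x₀.num, by rw [← hkey]; ring⟩
  -- r' is coprime to n
  have h1 : IsCoprime r' b := hb.symm.of_isCoprime_of_dvd_left hr'r
  have h3 : IsCoprime r' n := by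
    have h4 : IsCoprime r' (q * b) := hqr'.symm.mul_right h1
    have h5 := h4.add_mul_left_right (a₀ * g)
    have h6 : n = q * b + r' * (a₀ * g) := by rw [hn, ← hrr']; ring
    rwa [← h6] at h5
  have hr's : r' ∣ s :=
    h3.dvd_of_dvd_mul_left ((hr'r.trans (dvd_mul_left r q)).trans hqr_dvd)
  set k := EuclideanDomain.gcd q s with hk
  have hkq : k ∣ q := EuclideanDomain.gcd_dvd_left q s
  have hks : k ∣ s := EuclideanDomain.gcd_dvd_right q s
  have hk0 : k ≠ 0 := by
    intro h
    exact hq0 (EuclideanDomain.gcd_eq_zero_iff.mp h).1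
  set u := q / k with hu
  have huk : k * u = q := EuclideanDomain.mul_div_cancel' hk0 hkq
  have hu0 : u ≠ 0 := by
    intro h
    rw [h, mul_zero] at huk
    exact hq0 huk.symm
  have huq : u ∣ q := ⟨k, by rw [← huk]; ring⟩
  have hus : IsCoprime u s := by
    rw [← EuclideanDomain.gcd_isUnit_iff]
    set d := EuclideanDomain.gcd u s with hd
    have hdu : d ∣ u := EuclideanDomain.gcd_dvd_left u s
    have hds : d ∣ s := EuclideanDomain.gcd_dvd_right u s
    have hdk : d ∣ k := EuclideanDomain.dvd_gcd (hdu.trans huq) hds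
    exact hq d (by rw [← huk]; exact mul_dvd_mul hdk hdu)
  -- every element of T is congruent to a₀ modulo u
  have hstepC : ∀ a ∈ T, u ∣ a + a₀ := by
    intro a ha
    rw [hT, Finset.mem_filter] at ha
    obtain ⟨hares, haden⟩ := ha
    set x := A a / A q + A b / A r with hxdef
    have hbb : A b / A r + A b / A r = 0 := by
      rw [← add_div, ← map_add, CharTwo.add_self_eq_zero, map_zero, zero_div]
    have hy : x + x₀ = A (a + a₀) / A q := by
      rw [hxdef, hx₀def]
      have : A a / A q + A b / A r + (A a₀ / A q + A b / A r)
          = (A a / A q + A a₀ / A q) + (A b / A r + A b / A r) := by ring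
      rw [this, hbb, add_zero, ← add_div, ← map_add]
    have hyden : (x + x₀).denom ∣ s * s := by
      have := RatFunc.denom_add_dvd x x₀
      rwa [haden, ha₀den] at this
    have hyc : (x + x₀).num * q = (a + a₀) * (x + x₀).denom :=
      (RatFunc.num_mul_eq_mul_denom_iff hq0).mpr hy
    have hq_dvd : q ∣ (a + a₀) * (s * s) :=
      dvd_trans ⟨(x + x₀).num, by rw [← hyc]; ring⟩
        (mul_dvd_mul_left (a + a₀) hyden)
    exact (hus.mul_right hus).dvd_of_dvd_mul_right (huq.trans hq_dvd)
  -- counting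
  set S := (GN q.natDegree).filter (fun c => u ∣ c) with hS
  have hdegT : ∀ a ∈ T, a ∈ GN q.natDegree := by
    intro a ha
    rw [hT, Finset.mem_filter] at ha
    exact Finset.mem_of_mem_filter a ha.1
  have hcard1 : T.card ≤ S.card := by
    apply Finset.card_le_card_of_injOn (fun a => a + a₀)
    · intro a ha
      simp only [Finset.mem_coe, hS, Finset.mem_filter]
      constructor
      · rw [mem_GN_iff]
        have h1 := mem_GN_iff.mp (hdegT a ha)
        have h2 := mem_GN_iff.mp (hdegT a₀ (by rw [hT, Finset.mem_filter]; exact ⟨ha₀res, ha₀den⟩))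
        exact lt_of_le_of_lt (Polynomial.degree_add_le a a₀) (max_lt h1 h2)
      · exact hstepC a ha
    · intro a _ a' _ h
      simpa using h
  have hcard2 : S.card ≤ (GN k.natDegree).card := by
    apply Finset.card_le_card_of_injOn (fun c => c / u)
    · intro c hc
      simp only [Finset.mem_coe, hS, Finset.mem_filter] at hc
      obtain ⟨hcG, hcu⟩ := hc
      have hcc : u * (c / u) = c := EuclideanDomain.mul_div_cancel' hu0 hcu
      simp only [Finset.mem_coe, mem_GN_iff]
      rcases eq_or_ne c 0 with rfl | hc0
      · rw [EuclideanDomain.zero_div]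
        simp only [Polynomial.degree_zero]
        exact_mod_cast WithBot.bot_lt_coe k.natDegree
      · have hw0 : c / u ≠ 0 := by
          intro h
          rw [h, mul_zero] at hcc
          exact hc0 hcc.symm
        rw [← Polynomial.natDegree_lt_iff_degree_lt hw0]
        have e1 : c.natDegree = u.natDegree + (c / u).natDegree := by
          have := Polynomial.natDegree_mul hu0 hw0
          rw [hcc] at this
          exact this
        have e2 : q.natDegree = k.natDegree + u.natDegree := by
          rw [← huk, Polynomial.natDegree_mul hk0 hu0]
        have e3 : c.natDegree < q.natDegree :=
          (Polynomial.natDegree_lt_iff_degree_lt hc0).mpr (mem_GN_iff.mp hcG)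
        omega
    · intro c hc c' hc' h
      have hc2 : u ∣ c := (Finset.mem_filter.mp (Finset.mem_coe.mp hc)).2
      have hc2' : u ∣ c' := (Finset.mem_filter.mp (Finset.mem_coe.mp hc')).2
      simp only at h
      rw [← EuclideanDomain.mul_div_cancel' hu0 hc2, ← EuclideanDomain.mul_div_cancel' hu0 hc2', h]
  have hcardT : T.card ≤ 2 ^ k.natDegree := by
    calc T.card ≤ (GN k.natDegree).card := le_trans hcard1 hcard2
    _ = 2 ^ k.natDegree := GN_card _
  -- degree estimate
  have hkr' : IsCoprime k r' := hqr'.of_isCoprime_of_dvd_left hkq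
  have hkr's : k * r' ∣ s := hkr'.mul_dvd hks hr's
  have hdegs : k.natDegree + r'.natDegree ≤ s.natDegree := by
    have := Polynomial.natDegree_le_of_dvd hkr's hs0
    rwa [Polynomial.natDegree_mul hk0 hr'0] at this
  have hdegr : r.natDegree = g.natDegree + r'.natDegree := by
    rw [← hrr', Polynomial.natDegree_mul hg0 hr'0]
  have hZ : (k.natDegree : ℤ) ≤ (s.natDegree : ℤ) + (g.natDegree : ℤ) - (r.natDegree : ℤ) := by
    omega
  calc (T.card : ℝ) ≤ ((2 ^ k.natDegree : ℕ) : ℝ) := by exact_mod_cast hcardT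
  _ = (2 : ℝ) ^ (k.natDegree : ℤ) := by
      rw [zpow_natCast]
      norm_num
  _ ≤ (2 : ℝ) ^ ((s.natDegree : ℤ) + ((EuclideanDomain.gcd q r).natDegree : ℤ)
        - (r.natDegree : ℤ)) := by
      apply zpow_le_zpow_right₀ one_le_two
      exact hZ
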